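/- Let 0 < ε < 1/2 and let W ≥ 1 be an integer. Let β ≥ β⁻ + 2 be integers such that β/β⁻ ≤ 1 + ε/(5W) and β⁻ ≥ 4W/ε. Then any (β, β⁻)-w-EDCS H of a bipartite edge-weighted graph G with integer edge weights in {1,...,W} contains a matching M_H such that (2 − 1/(2W) + ε)·w(M_H) ≥ w(M_G). -/

import Mathlib

open scoped Classical

variable {V : Type*} [Fintype V]

/-- Degree of a vertex in a simple graph. -/
noncomputable def sdeg (H : SimpleGraph V) (v : V) : ℕ :=
  (Finset.univ.filter (fun u => H.Adj v u)).card

/-- Weighted degree of a vertex in a simple graph with edge weights `w`. -/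
noncomputable def swdeg (H : SimpleGraph V) (w : V → V → ℕ) (v : V) : ℕ :=
  ∑ u ∈ Finset.univ.filter (fun u => H.Adj v u), w v u

/-- The weight function is symmetric and takes values in `{1, ..., W}` on edges of `G`. -/
def ValidWeights (W : ℕ) (G : SimpleGraph V) (w : V → V → ℕ) : Prop :=
  (∀ u v, w u v = w v u) ∧ ∀ u v, G.Adj u v → 1 ≤ w u v ∧ w u v ≤ W

/-- `H` is a `(β, βm)`-w-EDCS of the edge-weighted simple graph `(G, w)`. -/
def IsWEDCS (G H : SimpleGraph V) (w : V → V → ℕ) (β βm : ℕ) : Prop :=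
  H ≤ G ∧
  (∀ u v, H.Adj u v → swdeg H w u + swdeg H w v ≤ β * w u v) ∧
  (∀ u v, G.Adj u v → ¬ H.Adj u v → βm * w u v ≤ swdeg H w u + swdeg H w v)

/-- `M` is a matching of the simple graph `H`: a set of pairwise vertex-disjoint edges. -/
def IsSMatching (H : SimpleGraph V) (M : Finset (V × V)) : Prop :=
  (∀ e ∈ M, H.Adj e.1 e.2) ∧
  ∀ e ∈ M, ∀ e' ∈ M, e ≠ e' →
    e.1 ≠ e'.1 ∧ e.1 ≠ e'.2 ∧ e.2 ≠ e'.1 ∧ e.2 ≠ e'.2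

/-- Total weight of a matching. -/
def smwt (w : V → V → ℕ) (M : Finset (V × V)) : ℕ := ∑ e ∈ M, w e.1 e.2

lemma BW_jensen (p q : ℝ) (hp1 : p < 1) (hq1 : q < 1) (hp : 0 ≤ p) (hq : 0 ≤ q) :
    (p + q) / (1 - (p + q) / 2) ≤ p / (1 - p) + q / (1 - q) := by
  have h1 : 0 < 1 - p := by linarith
  have h2 : 0 < 1 - q := by linarith
  have h3 : 0 < 1 - (p + q) / 2 := by linarith
  rw [div_add_div _ _ (ne_of_gt h1) (ne_of_gt h2), div_le_div_iff₀ h3 (by positivity)]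
  nlinarith [sq_nonneg (p - q)]

lemma BW_mono (s t : ℝ) (hs : 0 ≤ s) (hst : s ≤ t) (ht : t < 2) :
    s / (1 - s / 2) ≤ t / (1 - t / 2) := by
  have h1 : 0 < 1 - s / 2 := by linarith
  have h2 : 0 < 1 - t / 2 := by linarith
  rw [div_le_div_iff₀ h1 h2]
  nlinarith

set_option maxHeartbeats 1000000 in
lemma BW_core (Wr βr βmr wr mr p q ru rv ε : ℝ)
    (hW : 1 ≤ Wr) (hw1 : 1 ≤ wr) (hwW : wr ≤ Wr)
    (hm0 : 0 ≤ mr) (hmw : mr + 1 ≤ wr)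
    (hβm : 0 < βmr) (hβ : βmr ≤ βr)
    (hratio : βr ≤ βmr * (1 + ε / (5 * Wr)))
    (hε : 0 < ε) (hε2 : ε < 1/2)
    (hp : 0 ≤ p) (hq : 0 ≤ q) (hp1 : p < 1) (hq1 : q < 1)
    (hpq : βmr * wr / (βr * Wr) - mr / Wr ≤ p + q)
    (hru : p / (1 - p) ≤ ru / Wr) (hrv : q / (1 - q) ≤ rv / Wr) :
    wr ≤ (1 + ε/2) * mr + (1 - 1/(2*Wr) + ε/4) * (ru + rv) := by
  have hW0 : (0:ℝ) < Wr := by linarith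
  have hβr0 : (0:ℝ) < βr := lt_of_lt_of_le hβm hβ
  have hβWr : (0:ℝ) < βr * Wr := by positivity
  have hratio' : 5 * Wr * βr ≤ 5 * Wr * βmr + βmr * ε := by
    have h5 : (0:ℝ) < 5 * Wr := by positivity
    have h := mul_le_mul_of_nonneg_left hratio (le_of_lt h5)
    calc 5 * Wr * βr ≤ 5 * Wr * (βmr * (1 + ε / (5 * Wr))) := h
      _ = 5 * Wr * βmr + βmr * ε := by field_simp
  obtain ⟨Δ, hΔnum⟩ : ∃ d : ℝ, d = (βmr * wr - mr * βr) / (βr * Wr) := ⟨_, rfl⟩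
  have hΔdef : βmr * wr / (βr * Wr) - mr / Wr = Δ := by rw [hΔnum]; field_simp
  rw [hΔdef] at hpq
  have hkey0 : 0 < βmr * wr - mr * βr := by
    nlinarith [mul_nonneg (sub_nonneg.mpr hwW) (sub_nonneg.mpr hβ),
      mul_le_mul_of_nonneg_right (show mr ≤ wr - 1 by linarith) (le_of_lt hβr0)]
  have hΔpos : 0 < Δ := by rw [hΔnum]; exact div_pos hkey0 hβWr
  have hΔ1 : Δ ≤ 1 := by
    rw [hΔnum, div_le_one hβWr]
    nlinarith [mul_le_mul_of_nonneg_left hwW (le_of_lt hβm),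
      mul_le_mul_of_nonneg_right hβ (le_of_lt hW0), mul_nonneg hm0 (le_of_lt hβr0)]
  have hΔhalf : 0 < 1 - Δ / 2 := by linarith
  have hs2 : p + q < 2 := by linarith
  have hQ : Δ / (1 - Δ / 2) ≤ ru / Wr + rv / Wr :=
    calc Δ / (1 - Δ / 2) ≤ (p + q) / (1 - (p + q) / 2) :=
          BW_mono Δ (p + q) (le_of_lt hΔpos) hpq hs2
      _ ≤ p / (1 - p) + q / (1 - q) := BW_jensen p q hp1 hq1 hp hq
      _ ≤ ru / Wr + rv / Wr := add_le_add hru hrv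
  -- key coefficient inequality : βr * (1 - Δ/2) ≤ Γ * βmr
  have hβΔ : βr * Δ = (βmr * wr - mr * βr) / Wr := by
    rw [hΔnum]; field_simp
  have hΓkey : βr * (1 - Δ / 2) ≤ (1 - 1/(2*Wr) + ε/4) * βmr := by
    have h10 : (0:ℝ) < 10 * Wr^2 := by positivity
    rw [← mul_le_mul_iff_right₀ h10]
    have hL : 10 * Wr^2 * (βr * (1 - Δ / 2)) =
        10 * Wr^2 * βr - 5 * Wr * (βmr * wr - mr * βr) := by
      have : 10 * Wr^2 * (βr * (1 - Δ / 2)) = 10 * Wr^2 * βr - 5 * Wr^2 * (βr * Δ) := by ring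
      rw [this, hβΔ]; field_simp
    have hR : 10 * Wr^2 * ((1 - 1/(2*Wr) + ε/4) * βmr) =
        10 * Wr^2 * βmr - 5 * Wr * βmr + 5 * Wr^2 * βmr * ε / 2 := by
      field_simp; ring
    rw [hL, hR]
    have h1 := mul_le_mul_of_nonneg_left hratio' (show (0:ℝ) ≤ 2*Wr + wr - 1 by linarith)
    have h2 := mul_le_mul_of_nonneg_right (show mr ≤ wr - 1 by linarith) (le_of_lt hβr0)
    have h3 : (0:ℝ) ≤ βmr * ε * (5*Wr^2 - 4*Wr - 2*wr + 2) := by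
      apply mul_nonneg (mul_nonneg hβm.le hε.le)
      nlinarith [sq_nonneg (Wr - 3/5)]
    linarith [h1, h3, mul_le_mul_of_nonneg_left h2 (show (0:ℝ) ≤ 5*Wr by linarith)]
  -- conclude
  have hΓpos : (0:ℝ) < 1 - 1/(2*Wr) + ε/4 := by
    have : 1/(2*Wr) ≤ 1/2 := by
      rw [div_le_div_iff₀ (by positivity) (by norm_num)]; linarith
    linarith
  have hQ' : Wr * (Δ / (1 - Δ / 2)) ≤ ru + rv := by
    have := mul_le_mul_of_nonneg_left hQ (le_of_lt hW0)
    calc Wr * (Δ / (1 - Δ / 2)) ≤ Wr * (ru / Wr + rv / Wr) := this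
      _ = ru + rv := by field_simp
  have hmain : (βr / βmr) * (Wr * Δ) ≤ (1 - 1/(2*Wr) + ε/4) * (ru + rv) := by
    calc (βr / βmr) * (Wr * Δ)
        = (βr * (1 - Δ/2) / βmr) * (Wr * (Δ / (1 - Δ / 2))) := by
          have h : (βr * (1 - Δ/2) / βmr) * (Wr * (Δ / (1 - Δ / 2)))
              = (βr / βmr) * (Wr * Δ) * ((1 - Δ/2) / (1 - Δ/2)) := by ring
          rw [h, div_self (ne_of_gt hΔhalf), mul_one]
      _ ≤ ((1 - 1/(2*Wr) + ε/4) * βmr / βmr) * (Wr * (Δ / (1 - Δ / 2))) := by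
          apply mul_le_mul_of_nonneg_right _
            (mul_nonneg hW0.le (div_nonneg hΔpos.le hΔhalf.le))
          gcongr
      _ = (1 - 1/(2*Wr) + ε/4) * (Wr * (Δ / (1 - Δ / 2))) := by
          rw [mul_div_assoc, div_self (ne_of_gt hβm), mul_one]
      _ ≤ (1 - 1/(2*Wr) + ε/4) * (ru + rv) :=
          mul_le_mul_of_nonneg_left hQ' (le_of_lt hΓpos)
  have hWΔ : (βr / βmr) * (Wr * Δ) = wr - mr * (βr / βmr) := by
    rw [hΔnum]; field_simp
  have hρ : βr / βmr ≤ 1 + ε/2 := by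
    rw [div_le_iff₀ hβm]
    nlinarith [hratio']
  nlinarith [hmain, hWΔ, mul_le_mul_of_nonneg_left hρ hm0]

-- ### new material
open Finset

/-- A (weighted) vertex cover of `H`. -/
def BWCover (H : SimpleGraph V) (w : V → V → ℕ) (y : V → ℕ) : Prop :=
  ∀ u v, H.Adj u v → w u v ≤ y u + y v

/-- neighbourhood finset -/
noncomputable def BWnb (H : SimpleGraph V) (u : V) : Finset V :=
  Finset.univ.filter (fun z => H.Adj u z)

lemma BWnb_mem {H : SimpleGraph V} {u z : V} : z ∈ BWnb H u ↔ H.Adj u z := by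
  simp [BWnb]

/-- share function -/
noncomputable def BWr (H : SimpleGraph V) (w : V → V → ℕ) (y : V → ℕ) (u : V) : ℝ :=
  ∑ z ∈ BWnb H u, (y z : ℝ) * (w u z : ℝ) / (swdeg H w z : ℝ)

lemma BWr_nonneg (H : SimpleGraph V) (w : V → V → ℕ) (y : V → ℕ) (u : V) :
    0 ≤ BWr H w y u :=
  Finset.sum_nonneg fun z _ => by positivity

lemma swdeg_ge (H : SimpleGraph V) (w : V → V → ℕ) {z u : V} (h : H.Adj z u) :
    w z u ≤ swdeg H w z :=
  Finset.single_le_sum (f := fun i => w z i) (fun i _ => Nat.zero_le _) (by simp [h])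

lemma swdeg_pos {W : ℕ} {G H : SimpleGraph V} {w : V → V → ℕ}
    (hw : ValidWeights W G w) (hHG : H ≤ G) {z u : V} (h : H.Adj z u) :
    1 ≤ swdeg H w z :=
  le_trans (hw.2 z u (hHG h)).1 (swdeg_ge H w h)

lemma sum_BWr_le {W : ℕ} {G H : SimpleGraph V} {w : V → V → ℕ} (y : V → ℕ)
    (hw : ValidWeights W G w) (hHG : H ≤ G) :
    ∑ u, BWr H w y u ≤ ∑ u, (y u : ℝ) := by
  unfold BWr
  have hiff : ∀ u z : V, (if H.Adj u z then (y z : ℝ) * (w u z : ℝ) / (swdeg H w z : ℝ) else 0)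
      = (if H.Adj z u then (y z : ℝ) * (w u z : ℝ) / (swdeg H w z : ℝ) else 0) := by
    intro u z
    by_cases h : H.Adj u z
    · rw [if_pos h, if_pos h.symm]
    · rw [if_neg h, if_neg (fun h' => h h'.symm)]
  have hswap : ∑ u, ∑ z ∈ BWnb H u, (y z : ℝ) * (w u z : ℝ) / (swdeg H w z : ℝ)
      = ∑ z, ∑ u ∈ BWnb H z, (y z : ℝ) * (w u z : ℝ) / (swdeg H w z : ℝ) := by
    calc ∑ u, ∑ z ∈ BWnb H u, (y z : ℝ) * (w u z : ℝ) / (swdeg H w z : ℝ)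
        = ∑ u, ∑ z, (if H.Adj u z then (y z : ℝ) * (w u z : ℝ) / (swdeg H w z : ℝ) else 0) := by
          apply Finset.sum_congr rfl; intro u _; rw [BWnb, Finset.sum_filter]
      _ = ∑ z, ∑ u, (if H.Adj u z then (y z : ℝ) * (w u z : ℝ) / (swdeg H w z : ℝ) else 0) :=
          Finset.sum_comm
      _ = ∑ z, ∑ u, (if H.Adj z u then (y z : ℝ) * (w u z : ℝ) / (swdeg H w z : ℝ) else 0) := by
          apply Finset.sum_congr rfl; intro z _; apply Finset.sum_congr rfl; intro u _
          exact hiff u z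
      _ = ∑ z, ∑ u ∈ BWnb H z, (y z : ℝ) * (w u z : ℝ) / (swdeg H w z : ℝ) := by
          apply Finset.sum_congr rfl; intro z _; rw [BWnb, Finset.sum_filter]
  rw [hswap]
  apply Finset.sum_le_sum
  intro z _
  by_cases hz : BWnb H z = ∅
  · rw [hz]; simp
  · obtain ⟨u₀, hu₀⟩ := Finset.nonempty_iff_ne_empty.mpr hz
    have hdz : 1 ≤ swdeg H w z := swdeg_pos hw hHG (BWnb_mem.mp hu₀)
    have hdz' : ((swdeg H w z : ℕ) : ℝ) ≠ 0 := by
      simp only [ne_eq, Nat.cast_eq_zero]; omega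
    calc ∑ u ∈ BWnb H z, (y z : ℝ) * (w u z : ℝ) / (swdeg H w z : ℝ)
        = ∑ u ∈ BWnb H z, (y z : ℝ) * (w z u : ℝ) / (swdeg H w z : ℝ) := by
          apply Finset.sum_congr rfl; intro u _; rw [hw.1 u z]
      _ = (y z : ℝ) * (∑ u ∈ BWnb H z, (w z u : ℝ)) / (swdeg H w z : ℝ) := by
          rw [Finset.mul_sum, Finset.sum_div]
      _ = (y z : ℝ) * ((swdeg H w z : ℕ) : ℝ) / (swdeg H w z : ℝ) := by
          norm_num [swdeg, BWnb]
      _ = (y z : ℝ) := by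
          rw [mul_div_assoc, div_self hdz', mul_one]
      _ ≤ (y z : ℝ) := le_refl _

lemma BW_card_le {W β βm : ℕ} {G H : SimpleGraph V} {w : V → V → ℕ}
    (hw : ValidWeights W G w) (hH : IsWEDCS G H w β βm) (u : V) :
    (BWnb H u).card ≤ β := by
  have h1 : ∀ z ∈ BWnb H u, swdeg H w u + 1 ≤ β * w u z := by
    intro z hz
    have hadj := BWnb_mem.mp hz
    have hP1 := hH.2.1 u z hadj
    have hdz : 1 ≤ swdeg H w z := swdeg_pos hw hH.1 hadj.symm
    omega
  have h2 : (BWnb H u).card * (swdeg H w u + 1) ≤ β * swdeg H w u := by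
    calc (BWnb H u).card * (swdeg H w u + 1) = ∑ _z ∈ BWnb H u, (swdeg H w u + 1) := by
          rw [Finset.sum_const, smul_eq_mul]
      _ ≤ ∑ z ∈ BWnb H u, β * w u z := Finset.sum_le_sum h1
      _ = β * swdeg H w u := by
          rw [← Finset.mul_sum]; congr 1
  by_contra hcon
  push_neg at hcon
  have h3 : (β + 1) * (swdeg H w u + 1) ≤ (BWnb H u).card * (swdeg H w u + 1) :=
    Nat.mul_le_mul_right _ hcon
  nlinarith [h2, h3]

lemma BW_swdeg_lt {W β βm : ℕ} {G H : SimpleGraph V} {w : V → V → ℕ}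
    (hw : ValidWeights W G w) (hH : IsWEDCS G H w β βm) (hW : 1 ≤ W) (hβ3 : 3 ≤ β) (u : V) :
    swdeg H w u < β * W := by
  by_cases hu : BWnb H u = ∅
  · have h0 : swdeg H w u = 0 := by
      have : (Finset.univ.filter (fun z => H.Adj u z)) = (∅ : Finset V) := hu
      rw [swdeg, this, Finset.sum_empty]
    rw [h0]
    exact Nat.mul_pos (by omega) (by omega)
  · obtain ⟨z, hz⟩ := Finset.nonempty_iff_ne_empty.mpr hu
    have hadj := BWnb_mem.mp hz
    have hP1 := hH.2.1 u z hadj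
    have hdz : 1 ≤ swdeg H w z := swdeg_pos hw hH.1 hadj.symm
    have hwW : w u z ≤ W := (hw.2 u z (hH.1 hadj)).2
    have hβw : β * w u z ≤ β * W := Nat.mul_le_mul_left _ hwW
    omega

lemma BWr_ge {W β βm : ℕ} {G H : SimpleGraph V} {w : V → V → ℕ} {y : V → ℕ}
    (hw : ValidWeights W G w) (hH : IsWEDCS G H w β βm)
    (hW : 1 ≤ W) (hβ3 : 3 ≤ β)
    (hcov : BWCover H w y) (u : V) :
    ((swdeg H w u : ℝ) - (β : ℝ) * (y u : ℝ)) * (W : ℝ) / ((β : ℝ) * (W : ℝ) - (swdeg H w u : ℝ))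
      ≤ BWr H w y u := by
  have hdu := BW_swdeg_lt hw hH hW hβ3 u
  have hden : (0:ℝ) < (β : ℝ) * W - swdeg H w u := by
    have h : (swdeg H w u : ℝ) < (β : ℝ) * W := by exact_mod_cast hdu
    linarith
  have hterm : ∀ z ∈ BWnb H u,
      ((w u z : ℝ) - y u) * W / ((β:ℝ) * W - swdeg H w u)
        ≤ (y z : ℝ) * (w u z : ℝ) / (swdeg H w z : ℝ) := by
    intro z hz
    have hadj := BWnb_mem.mp hz
    have hP1 := hH.2.1 u z hadj
    have hdz1 : 1 ≤ swdeg H w z := swdeg_pos hw hH.1 hadj.symm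
    have hw1 : 1 ≤ w u z := (hw.2 u z (hH.1 hadj)).1
    have hwW : w u z ≤ W := (hw.2 u z (hH.1 hadj)).2
    rcases le_or_gt ((w u z : ℝ)) (y u) with h | h
    · have hnum : ((w u z : ℝ) - y u) * W ≤ 0 :=
        mul_nonpos_of_nonpos_of_nonneg (by linarith) (by positivity)
      calc ((w u z : ℝ) - y u) * W / ((β:ℝ) * W - swdeg H w u) ≤ 0 :=
            div_nonpos_of_nonpos_of_nonneg hnum hden.le
        _ ≤ _ := by positivity
    · have hyz : (w u z : ℝ) - y u ≤ y z := by
        have hc := hcov u z hadj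
        have hc' : (w u z : ℝ) ≤ (y u : ℝ) + y z := by exact_mod_cast hc
        linarith
      have hdzle : (swdeg H w z : ℝ) ≤ (β:ℝ) * w u z - swdeg H w u := by
        have : (swdeg H w u : ℝ) + swdeg H w z ≤ (β:ℝ) * w u z := by exact_mod_cast hP1
        linarith
      have hdzpos : (0:ℝ) < (swdeg H w z : ℝ) := by exact_mod_cast hdz1
      have hfrac : (W:ℝ) / ((β:ℝ)*W - swdeg H w u) ≤ (w u z : ℝ) / (swdeg H w z : ℝ) := by
        rw [div_le_div_iff₀ hden hdzpos]
        have hww : (w u z : ℝ) ≤ W := by exact_mod_cast hwW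
        have hdu0 : (0:ℝ) ≤ (swdeg H w u : ℝ) := by positivity
        nlinarith [mul_le_mul_of_nonneg_left hdzle (show (0:ℝ) ≤ W by positivity)]
      calc ((w u z : ℝ) - y u) * W / ((β:ℝ) * W - swdeg H w u)
          = ((w u z : ℝ) - y u) * ((W:ℝ) / ((β:ℝ)*W - swdeg H w u)) := by ring
        _ ≤ ((w u z : ℝ) - y u) * ((w u z : ℝ) / (swdeg H w z : ℝ)) :=
            mul_le_mul_of_nonneg_left hfrac (by linarith)
        _ ≤ (y z : ℝ) * ((w u z : ℝ) / (swdeg H w z : ℝ)) :=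
            mul_le_mul_of_nonneg_right hyz (by positivity)
        _ = (y z : ℝ) * (w u z : ℝ) / (swdeg H w z : ℝ) := by ring
  have hsum := Finset.sum_le_sum hterm
  have hcast : ((swdeg H w u : ℕ) : ℝ) = ∑ z ∈ BWnb H u, ((w u z : ℕ) : ℝ) := by
    rw [swdeg]
    push_cast
    rfl
  have hLHS : ∑ z ∈ BWnb H u, ((w u z : ℝ) - y u) * W / ((β:ℝ) * W - swdeg H w u)
      = ((swdeg H w u : ℝ) - ((BWnb H u).card : ℝ) * y u) * W
          / ((β:ℝ) * W - swdeg H w u) := by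
    rw [← Finset.sum_div, ← Finset.sum_mul]
    congr 2
    rw [Finset.sum_sub_distrib, Finset.sum_const, nsmul_eq_mul, hcast]
  have hcard : ((BWnb H u).card : ℝ) ≤ (β : ℝ) := by
    exact_mod_cast BW_card_le hw hH u
  have hnumle : ((swdeg H w u : ℝ) - (β : ℝ) * y u) * W
      ≤ ((swdeg H w u : ℝ) - ((BWnb H u).card : ℝ) * y u) * W := by
    apply mul_le_mul_of_nonneg_right _ (by positivity : (0:ℝ) ≤ (W:ℝ))
    have : ((BWnb H u).card : ℝ) * y u ≤ (β : ℝ) * y u :=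
      mul_le_mul_of_nonneg_right hcard (by positivity)
    linarith
  calc ((swdeg H w u : ℝ) - (β : ℝ) * y u) * W / ((β:ℝ) * W - swdeg H w u)
      ≤ ((swdeg H w u : ℝ) - ((BWnb H u).card : ℝ) * y u) * W
          / ((β:ℝ) * W - swdeg H w u) := by
        rw [div_le_div_iff₀ hden hden]
        exact mul_le_mul_of_nonneg_right hnumle hden.le
    _ = ∑ z ∈ BWnb H u, ((w u z : ℝ) - y u) * W / ((β:ℝ) * W - swdeg H w u) := hLHS.symm
    _ ≤ ∑ z ∈ BWnb H u, (y z : ℝ) * (w u z : ℝ) / (swdeg H w z : ℝ) := hsum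
    _ = BWr H w y u := rfl

lemma BW_matchsum {G : SimpleGraph V} {M' : Finset (V × V)} (hM' : IsSMatching G M')
    (g : V → ℝ) (hg : ∀ v, 0 ≤ g v) :
    ∑ e ∈ M', ((g e.1) + (g e.2)) ≤ ∑ v, g v := by
  have hinj1 : ∀ e ∈ M', ∀ e' ∈ M', e.1 = e'.1 → e = e' := by
    intro e he e' he' h
    by_contra hne
    exact ((hM'.2 e he e' he' hne).1) h
  have hinj2 : ∀ e ∈ M', ∀ e' ∈ M', e.2 = e'.2 → e = e' := by
    intro e he e' he' h
    by_contra hne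
    exact ((hM'.2 e he e' he' hne).2.2.2) h
  have h1 : ∑ e ∈ M', g e.1 = ∑ v ∈ M'.image Prod.fst, g v :=
    (Finset.sum_image hinj1).symm
  have h2 : ∑ e ∈ M', g e.2 = ∑ v ∈ M'.image Prod.snd, g v :=
    (Finset.sum_image hinj2).symm
  have hdisj : Disjoint (M'.image Prod.fst) (M'.image Prod.snd) := by
    rw [Finset.disjoint_left]
    rintro v hv1 hv2
    obtain ⟨e, he, rfl⟩ := Finset.mem_image.mp hv1
    obtain ⟨e', he', heq⟩ := Finset.mem_image.mp hv2
    rcases eq_or_ne e e' with rfl | hne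
    · exact (G.irrefl (heq ▸ hM'.1 e he))
    · exact ((hM'.2 e he e' he' hne).2.1) heq.symm
  rw [Finset.sum_add_distrib, h1, h2, ← Finset.sum_union hdisj]
  apply Finset.sum_le_sum_of_subset_of_nonneg (Finset.subset_univ _)
  intro v _ _
  exact hg v

set_option maxHeartbeats 1000000 in
lemma BW_peredge {W β βm : ℕ} {G H : SimpleGraph V} {w : V → V → ℕ} {y : V → ℕ} {ε : ℝ}
    (hε0 : 0 < ε) (hε1 : ε < 1/2) (hW : 1 ≤ W) (hβ3 : 3 ≤ β)
    (hβm0 : 1 ≤ βm) (hββm : βm ≤ β)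
    (hratio : (β : ℝ) ≤ (βm : ℝ) * (1 + ε / (5 * (W:ℝ))))
    (hw : ValidWeights W G w) (hH : IsWEDCS G H w β βm)
    (hcov : BWCover H w y) {u v : V} (huv : G.Adj u v) :
    (w u v : ℝ) ≤ (1 + ε/2) * ((y u : ℝ) + (y v : ℝ))
      + (1 - 1/(2*(W:ℝ)) + ε/4) * (BWr H w y u + BWr H w y v) := by
  have hW1 : (1:ℝ) ≤ (W:ℝ) := by exact_mod_cast hW
  have hΓ0 : (0:ℝ) ≤ 1 - 1/(2*(W:ℝ)) + ε/4 := by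
    have h : 1/(2*(W:ℝ)) ≤ 1/2 := by
      rw [div_le_div_iff₀ (by positivity) (by norm_num)]; linarith
    linarith
  have hrpos := BWr_nonneg H w y u
  have hrpos' := BWr_nonneg H w y v
  by_cases hm : w u v ≤ y u + y v
  · have h1 : (w u v : ℝ) ≤ (y u : ℝ) + y v := by exact_mod_cast hm
    nlinarith [mul_nonneg hΓ0 (add_nonneg hrpos hrpos'),
      (show (0:ℝ) ≤ (y u : ℝ) + y v by positivity)]
  · have hnadj : ¬ H.Adj u v := fun h => hm (hcov u v h)
    have hP2 := hH.2.2 u v huv hnadj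
    -- real quantities
    have hβ0 : (0:ℝ) < (β:ℝ) := by exact_mod_cast (by omega : 0 < β)
    have hβm0' : (0:ℝ) < (βm:ℝ) := by exact_mod_cast (by omega : 0 < βm)
    have hW0 : (0:ℝ) < (W:ℝ) := by linarith
    have hBr0 : (0:ℝ) < (β:ℝ) * (W:ℝ) := by positivity
    have hdu := BW_swdeg_lt hw hH hW hβ3 u
    have hdv := BW_swdeg_lt hw hH hW hβ3 v
    have hduR : (swdeg H w u : ℝ) < (β:ℝ) * W := by exact_mod_cast hdu
    have hdvR : (swdeg H w v : ℝ) < (β:ℝ) * W := by exact_mod_cast hdv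
    set p : ℝ := max 0 ((swdeg H w u : ℝ) / ((β:ℝ)*W) - (y u : ℝ)/(W:ℝ)) with hpdef
    set q : ℝ := max 0 ((swdeg H w v : ℝ) / ((β:ℝ)*W) - (y v : ℝ)/(W:ℝ)) with hqdef
    have hp0 : 0 ≤ p := le_max_left _ _
    have hq0 : 0 ≤ q := le_max_left _ _
    have hp1 : p < 1 := by
      rw [hpdef]
      apply max_lt one_pos
      have h1 : (swdeg H w u : ℝ) / ((β:ℝ)*W) < 1 := (div_lt_one hBr0).mpr hduR
      have h2 : (0:ℝ) ≤ (y u : ℝ)/(W:ℝ) := by positivity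
      linarith
    have hq1 : q < 1 := by
      rw [hqdef]
      apply max_lt one_pos
      have h1 : (swdeg H w v : ℝ) / ((β:ℝ)*W) < 1 := (div_lt_one hBr0).mpr hdvR
      have h2 : (0:ℝ) ≤ (y v : ℝ)/(W:ℝ) := by positivity
      linarith
    have hpq : (βm:ℝ) * (w u v : ℝ) / ((β:ℝ) * (W:ℝ)) - ((y u : ℝ) + (y v : ℝ))/(W:ℝ) ≤ p + q := by
      have hsum : (βm:ℝ) * (w u v : ℝ) ≤ (swdeg H w u : ℝ) + (swdeg H w v : ℝ) := by
        exact_mod_cast hP2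
      have h1 : (swdeg H w u : ℝ) / ((β:ℝ)*W) - (y u : ℝ)/(W:ℝ) ≤ p := le_max_right _ _
      have h2 : (swdeg H w v : ℝ) / ((β:ℝ)*W) - (y v : ℝ)/(W:ℝ) ≤ q := le_max_right _ _
      have h3 : (βm:ℝ) * (w u v : ℝ) / ((β:ℝ) * (W:ℝ))
          ≤ ((swdeg H w u : ℝ) + (swdeg H w v : ℝ)) / ((β:ℝ) * (W:ℝ)) := by
        gcongr
      have h4 : ((swdeg H w u : ℝ) + (swdeg H w v : ℝ)) / ((β:ℝ) * (W:ℝ))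
          = (swdeg H w u : ℝ) / ((β:ℝ)*W) + (swdeg H w v : ℝ) / ((β:ℝ)*W) := by
        rw [add_div]
      have h5 : ((y u : ℝ) + (y v : ℝ))/(W:ℝ) = (y u : ℝ)/(W:ℝ) + (y v : ℝ)/(W:ℝ) := by
        rw [add_div]
      linarith
    -- share lower bounds
    have hshare : ∀ (z : V), (swdeg H w z : ℝ) < (β:ℝ)*W →
        max 0 ((swdeg H w z : ℝ) / ((β:ℝ)*W) - (y z : ℝ)/(W:ℝ))
          / (1 - max 0 ((swdeg H w z : ℝ) / ((β:ℝ)*W) - (y z : ℝ)/(W:ℝ)))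
          ≤ BWr H w y z / (W:ℝ) := by
      intro z hdz
      set t : ℝ := (swdeg H w z : ℝ) / ((β:ℝ)*W) - (y z : ℝ)/(W:ℝ) with htdef
      rcases le_or_gt t 0 with ht | ht
      · rw [max_eq_left ht, zero_div]
        exact div_nonneg (BWr_nonneg H w y z) hW0.le
      · rw [max_eq_right ht.le]
        have hx1 : (swdeg H w z : ℝ) / ((β:ℝ)*W) < 1 := (div_lt_one hBr0).mpr hdz
        have htx : t ≤ (swdeg H w z : ℝ) / ((β:ℝ)*W) := by
          rw [htdef]
          have : (0:ℝ) ≤ (y z : ℝ)/(W:ℝ) := by positivity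
          linarith
        have hden1 : (0:ℝ) < 1 - (swdeg H w z : ℝ) / ((β:ℝ)*W) := by linarith
        have hstep1 : t / (1 - t) ≤ t / (1 - (swdeg H w z : ℝ) / ((β:ℝ)*W)) := by
          apply div_le_div_of_nonneg_left ht.le hden1
          linarith
        have hstep2 : t / (1 - (swdeg H w z : ℝ) / ((β:ℝ)*W))
            = ((swdeg H w z : ℝ) - (β:ℝ) * (y z : ℝ)) / ((β:ℝ)*(W:ℝ) - (swdeg H w z : ℝ)) := by
          rw [htdef]
          rw [div_eq_div_iff (by linarith) (by linarith)]
          field_simp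
        have hstep3 : ((swdeg H w z : ℝ) - (β:ℝ) * (y z : ℝ)) / ((β:ℝ)*(W:ℝ) - (swdeg H w z : ℝ))
            ≤ BWr H w y z / (W:ℝ) := by
          have hge := BWr_ge hw hH hW hβ3 hcov z
          have hden2 : (0:ℝ) < (β:ℝ)*(W:ℝ) - (swdeg H w z : ℝ) := by linarith
          have heq : ((swdeg H w z : ℝ) - (β:ℝ) * (y z : ℝ)) * (W:ℝ)
              / ((β:ℝ)*(W:ℝ) - (swdeg H w z : ℝ)) / (W:ℝ)
              = ((swdeg H w z : ℝ) - (β:ℝ) * (y z : ℝ)) / ((β:ℝ)*(W:ℝ) - (swdeg H w z : ℝ)) := by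
            field_simp
          rw [← heq]
          gcongr
        calc t / (1 - t) ≤ t / (1 - (swdeg H w z : ℝ) / ((β:ℝ)*W)) := hstep1
          _ = ((swdeg H w z : ℝ) - (β:ℝ) * (y z : ℝ)) / ((β:ℝ)*(W:ℝ) - (swdeg H w z : ℝ)) := hstep2
          _ ≤ BWr H w y z / (W:ℝ) := hstep3
    have hru : p / (1 - p) ≤ BWr H w y u / (W:ℝ) := hshare u hduR
    have hrv : q / (1 - q) ≤ BWr H w y v / (W:ℝ) := hshare v hdvR
    -- apply the core inequality
    have hw1 : (1:ℝ) ≤ (w u v : ℝ) := by exact_mod_cast (hw.2 u v huv).1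
    have hwW : (w u v : ℝ) ≤ (W:ℝ) := by exact_mod_cast (hw.2 u v huv).2
    have hm0 : (0:ℝ) ≤ (y u : ℝ) + (y v : ℝ) := by positivity
    have hmw : ((y u : ℝ) + (y v : ℝ)) + 1 ≤ (w u v : ℝ) := by
      have : y u + y v + 1 ≤ w u v := by omega
      exact_mod_cast this
    have := BW_core (W:ℝ) (β:ℝ) (βm:ℝ) (w u v : ℝ) ((y u : ℝ) + (y v : ℝ)) p q
      (BWr H w y u) (BWr H w y v) ε hW1 hw1 hwW hm0 hmw hβm0'
      (by exact_mod_cast hββm) hratio hε0 hε1 hp0 hq0 hp1 hq1 hpq hru hrv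
    linarith [this]

lemma BW_mincover (H : SimpleGraph V) (w : V → V → ℕ) (W : ℕ)
    (hbound : ∀ u v, H.Adj u v → w u v ≤ W) :
    ∃ y : V → ℕ, BWCover H w y ∧ ∀ y' : V → ℕ, BWCover H w y' → ∑ v, y v ≤ ∑ v, y' v := by
  have hex : ∃ n, ∃ y : V → ℕ, BWCover H w y ∧ ∑ v, y v = n := by
    refine ⟨∑ _v : V, W, fun _ => W, ?_, rfl⟩
    intro u v h; have := hbound u v h; show w u v ≤ W + W; omega
  obtain ⟨y, hy, hyn⟩ := Nat.find_spec hex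
  refine ⟨y, hy, fun y' hy' => ?_⟩
  rw [hyn]
  exact Nat.find_min' hex ⟨y', hy', rfl⟩

/-- tight neighbours on the non-`AS` side -/
noncomputable def BWtn (H : SimpleGraph V) (w : V → V → ℕ) (y : V → ℕ) (AS : Set V) (a : V) :
    Finset V :=
  Finset.univ.filter (fun b => H.Adj a b ∧ y a + y b = w a b ∧ b ∉ AS)

lemma BW_hall_cond (H : SimpleGraph V) (w : V → V → ℕ) (y : V → ℕ)
    (hws : ∀ u v, w u v = w v u)
    (AS : Set V) (hbip : ∀ u v, H.Adj u v → (u ∈ AS ↔ v ∉ AS))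
    (hcov : BWCover H w y)
    (hmin : ∀ y' : V → ℕ, BWCover H w y' → ∑ v, y v ≤ ∑ v, y' v)
    (s : Finset V) (hs : ∀ a ∈ s, a ∈ AS ∧ 0 < y a) :
    s.card ≤ (s.biUnion (BWtn H w y AS)).card := by
  by_contra hcon
  push_neg at hcon
  set NS := s.biUnion (BWtn H w y AS) with hNS
  have hNSmem : ∀ x ∈ NS, x ∉ AS := by
    intro x hx
    obtain ⟨a, _ha, hxa⟩ := Finset.mem_biUnion.mp hx
    exact ((Finset.mem_filter.mp hxa).2).2.2
  have hdisj : Disjoint s NS := by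
    rw [Finset.disjoint_left]
    intro x hxs hxNS
    exact hNSmem x hxNS (hs x hxs).1
  set y' : V → ℕ := fun v => if v ∈ s then y v - 1 else if v ∈ NS then y v + 1 else y v with hy'
  have hy'cov : BWCover H w y' := by
    intro u v huv
    have hcuv := hcov u v huv
    have hside := hbip u v huv
    have hus : u ∈ s → (v ∉ s ∧ (y u + y v = w u v → v ∈ NS)) := by
      intro hu
      have huAS := (hs u hu).1
      have hvAS : v ∉ AS := (hside).mp huAS
      constructor
      · intro hv; exact hvAS (hs v hv).1
      · intro htight
        refine Finset.mem_biUnion.mpr ⟨u, hu, ?_⟩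
        simp only [BWtn, Finset.mem_filter, Finset.mem_univ, true_and]
        exact ⟨huv, htight, hvAS⟩
    have hvs : v ∈ s → (u ∉ s ∧ (y u + y v = w u v → u ∈ NS)) := by
      intro hv
      have hvAS := (hs v hv).1
      have huAS : u ∉ AS := fun h => ((hside).mp h) hvAS
      constructor
      · intro hu; exact huAS (hs u hu).1
      · intro htight
        refine Finset.mem_biUnion.mpr ⟨v, hv, ?_⟩
        simp only [BWtn, Finset.mem_filter, Finset.mem_univ, true_and]
        refine ⟨huv.symm, ?_, huAS⟩
        rw [← hws u v]
        omega
    show w u v ≤ y' u + y' v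
    by_cases hu : u ∈ s
    · obtain ⟨hvns, htight⟩ := hus hu
      have hyu := (hs u hu).2
      by_cases ht : y u + y v = w u v
      · have hvNS := htight ht
        simp only [hy', if_pos hu, if_neg hvns, if_pos hvNS]
        omega
      · simp only [hy', if_pos hu, if_neg hvns]
        split_ifs <;> omega
    · by_cases hv : v ∈ s
      · obtain ⟨huns, htight⟩ := hvs hv
        have hyv := (hs v hv).2
        by_cases ht : y u + y v = w u v
        · have huNS := htight ht
          simp only [hy', if_neg hu, if_pos huNS, if_pos hv]
          omega
        · simp only [hy', if_neg hu, if_pos hv]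
          split_ifs <;> omega
      · simp only [hy', if_neg hu, if_neg hv]
        split_ifs <;> omega
  have hsum : ∑ v, y' v < ∑ v, y v := by
    have hsub : s ∪ NS ⊆ Finset.univ := Finset.subset_univ _
    have hdecomp : ∀ f : V → ℕ,
        ∑ v, f v = ∑ x ∈ s, f x + ∑ x ∈ NS, f x + ∑ x ∈ Finset.univ \ (s ∪ NS), f x := by
      intro f
      rw [← Finset.sum_union hdisj, ← Finset.sum_union Finset.disjoint_sdiff,
        Finset.union_sdiff_of_subset hsub]
    have h1 : ∑ x ∈ s, y' x + s.card = ∑ x ∈ s, y x := by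
      rw [Finset.card_eq_sum_ones, ← Finset.sum_add_distrib]
      apply Finset.sum_congr rfl
      intro x hx
      have h0 := (hs x hx).2
      simp only [hy', if_pos hx]
      omega
    have h2 : ∑ x ∈ NS, y' x = ∑ x ∈ NS, y x + NS.card := by
      rw [Finset.card_eq_sum_ones, ← Finset.sum_add_distrib]
      apply Finset.sum_congr rfl
      intro x hx
      have hxs : x ∉ s := Finset.disjoint_right.mp hdisj hx
      simp only [hy', if_neg hxs, if_pos hx]
    have h3 : ∑ x ∈ Finset.univ \ (s ∪ NS), y' x = ∑ x ∈ Finset.univ \ (s ∪ NS), y x := by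
      apply Finset.sum_congr rfl
      intro x hx
      obtain ⟨-, hx2⟩ := Finset.mem_sdiff.mp hx
      have hxs : x ∉ s := fun h => hx2 (Finset.mem_union_left _ h)
      have hxNS : x ∉ NS := fun h => hx2 (Finset.mem_union_right _ h)
      simp only [hy', if_neg hxs, if_neg hxNS]
    have hA := hdecomp y
    have hB := hdecomp y'
    omega
  exact absurd (hmin y' hy'cov) (by omega)

/-- Mendelsohn–Dulmage style combination lemma. -/
lemma BW_MD (T : V → V → Prop) (AS : Set V) :
    ∀ (n : ℕ) (F PA PB : Finset V) (f g : V → V),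
    PB.card = n →
    (∀ a ∈ PA, a ∈ AS ∧ a ∉ F) →
    (∀ b ∈ PB, b ∉ AS ∧ b ∉ F) →
    (∀ a ∈ PA, T a (f a) ∧ f a ∉ AS ∧ f a ∉ F) →
    (∀ a ∈ PA, ∀ a' ∈ PA, f a = f a' → a = a') →
    (∀ b ∈ PB, T (g b) b ∧ g b ∈ AS ∧ g b ∉ F) →
    (∀ b ∈ PB, ∀ b' ∈ PB, g b = g b' → b = b') →
    ∃ M : Finset (V × V),
      (∀ e ∈ M, T e.1 e.2 ∧ e.1 ∈ AS ∧ e.2 ∉ AS ∧ e.1 ∉ F ∧ e.2 ∉ F) ∧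
      (∀ e ∈ M, ∀ e' ∈ M, e ≠ e' → e.1 ≠ e'.1 ∧ e.2 ≠ e'.2) ∧
      (∀ a ∈ PA, ∃ e ∈ M, e.1 = a) ∧ (∀ b ∈ PB, ∃ e ∈ M, e.2 = b) := by
  intro n
  induction n with
  | zero =>
    intro F PA PB f g hcard hPA hPB hf hfinj hg _hginj
    have hPBempty : PB = ∅ := Finset.card_eq_zero.mp hcard
    refine ⟨PA.image (fun a => (a, f a)), ?_, ?_, ?_, ?_⟩
    · intro e he
      obtain ⟨a, ha, rfl⟩ := Finset.mem_image.mp he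
      exact ⟨(hf a ha).1, (hPA a ha).1, (hf a ha).2.1, (hPA a ha).2, (hf a ha).2.2⟩
    · intro e he e' he' hne
      obtain ⟨a, ha, rfl⟩ := Finset.mem_image.mp he
      obtain ⟨a', ha', rfl⟩ := Finset.mem_image.mp he'
      constructor
      · intro h
        have h' : a = a' := h
        exact hne (by rw [h'])
      · intro h
        have h' : f a = f a' := h
        have h'' : a = a' := hfinj a ha a' ha' h'
        exact hne (by rw [h''])
    · intro a ha
      exact ⟨(a, f a), Finset.mem_image_of_mem _ ha, rfl⟩
    · intro b hb; rw [hPBempty] at hb; exact absurd hb (Finset.notMem_empty b)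
  | succ n ih =>
    intro F PA PB f g hcard hPA hPB hf hfinj hg hginj
    by_cases hsub : ∀ b ∈ PB, ∃ a ∈ PA, f a = b
    · -- the f-matching already covers everything
      refine ⟨PA.image (fun a => (a, f a)), ?_, ?_, ?_, ?_⟩
      · intro e he
        obtain ⟨a, ha, rfl⟩ := Finset.mem_image.mp he
        exact ⟨(hf a ha).1, (hPA a ha).1, (hf a ha).2.1, (hPA a ha).2, (hf a ha).2.2⟩
      · intro e he e' he' hne
        obtain ⟨a, ha, rfl⟩ := Finset.mem_image.mp he
        obtain ⟨a', ha', rfl⟩ := Finset.mem_image.mp he'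
        constructor
        · intro h
          have h' : a = a' := h
          exact hne (by rw [h'])
        · intro h
          have h' : f a = f a' := h
          have h'' : a = a' := hfinj a ha a' ha' h'
          exact hne (by rw [h''])
      · intro a ha
        exact ⟨(a, f a), Finset.mem_image_of_mem _ ha, rfl⟩
      · intro b hb
        obtain ⟨a, ha, hab⟩ := hsub b hb
        exact ⟨(a, f a), Finset.mem_image_of_mem _ ha, hab⟩
    · push_neg at hsub
      obtain ⟨bs, hbs, hbsnotim⟩ := hsub
      set as := g bs with has
      have hgbs := hg bs hbs
      have hF' : ∀ x, x ∈ (insert as (insert bs F)) ↔ (x = as ∨ x = bs ∨ x ∈ F) := by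
        intro x; simp [Finset.mem_insert]
      have hcard' : (PB.erase bs).card = n := by
        rw [Finset.card_erase_of_mem hbs, hcard]; rfl
      obtain ⟨M', hM'edge, hM'disj, hM'A, hM'B⟩ :=
        ih (insert as (insert bs F)) (PA.erase as) (PB.erase bs) f g hcard'
          (by
            intro a ha
            obtain ⟨hane, haPA⟩ := Finset.mem_erase.mp ha
            refine ⟨(hPA a haPA).1, ?_⟩
            rw [hF']
            push_neg
            refine ⟨hane, ?_, (hPA a haPA).2⟩
            intro h
            exact (hPB bs hbs).1 (h ▸ (hPA a haPA).1))
          (by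
            intro b hb
            obtain ⟨hbne, hbPB⟩ := Finset.mem_erase.mp hb
            refine ⟨(hPB b hbPB).1, ?_⟩
            rw [hF']
            push_neg
            refine ⟨?_, hbne, (hPB b hbPB).2⟩
            intro h
            exact (hPB b hbPB).1 (h ▸ hgbs.2.1))
          (by
            intro a ha
            obtain ⟨hane, haPA⟩ := Finset.mem_erase.mp ha
            refine ⟨(hf a haPA).1, (hf a haPA).2.1, ?_⟩
            rw [hF']
            push_neg
            refine ⟨?_, ?_, (hf a haPA).2.2⟩
            · intro h
              exact (hf a haPA).2.1 (h ▸ hgbs.2.1)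
            · intro h
              exact hbsnotim a haPA h)
          (by
            intro a ha a' ha' h
            exact hfinj a (Finset.mem_of_mem_erase ha) a' (Finset.mem_of_mem_erase ha') h)
          (by
            intro b hb
            obtain ⟨hbne, hbPB⟩ := Finset.mem_erase.mp hb
            refine ⟨(hg b hbPB).1, (hg b hbPB).2.1, ?_⟩
            rw [hF']
            push_neg
            refine ⟨?_, ?_, (hg b hbPB).2.2⟩
            · intro h
              exact hbne (hginj b hbPB bs hbs h)
            · intro h
              exact (hPB bs hbs).1 (h ▸ (hg b hbPB).2.1))
          (by
            intro b hb b' hb' h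
            exact hginj b (Finset.mem_of_mem_erase hb) b' (Finset.mem_of_mem_erase hb') h)
      have hM'avoid : ∀ e ∈ M', e.1 ≠ as ∧ e.2 ≠ bs := by
        intro e he
        have h := hM'edge e he
        constructor
        · intro hh
          exact h.2.2.2.1 (by rw [hh, hF']; left; rfl)
        · intro hh
          exact h.2.2.2.2 (by rw [hh, hF']; right; left; rfl)
      refine ⟨insert (as, bs) M', ?_, ?_, ?_, ?_⟩
      · intro e he
        rcases Finset.mem_insert.mp he with rfl | he'
        · exact ⟨hgbs.1, hgbs.2.1, (hPB bs hbs).1, hgbs.2.2, (hPB bs hbs).2⟩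
        · have h := hM'edge e he'
          refine ⟨h.1, h.2.1, h.2.2.1, ?_, ?_⟩
          · intro hFm; exact h.2.2.2.1 (by rw [hF']; right; right; exact hFm)
          · intro hFm; exact h.2.2.2.2 (by rw [hF']; right; right; exact hFm)
      · intro e he e' he' hne
        rcases Finset.mem_insert.mp he with rfl | he1
        · rcases Finset.mem_insert.mp he' with h2 | he2
          · exact absurd h2.symm hne
          · have h := hM'avoid e' he2
            exact ⟨fun hh => h.1 hh.symm, fun hh => h.2 hh.symm⟩
        · rcases Finset.mem_insert.mp he' with rfl | he2
          · have h := hM'avoid e he1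
            exact ⟨h.1, h.2⟩
          · exact hM'disj e he1 e' he2 hne
      · intro a ha
        by_cases haas : a = as
        · exact ⟨(as, bs), Finset.mem_insert_self _ _, haas.symm⟩
        · obtain ⟨e, he, hee⟩ := hM'A a (Finset.mem_erase.mpr ⟨haas, ha⟩)
          exact ⟨e, Finset.mem_insert_of_mem he, hee⟩
      · intro b hb
        by_cases hbbs : b = bs
        · exact ⟨(as, bs), Finset.mem_insert_self _ _, hbbs.symm⟩
        · obtain ⟨e, he, hee⟩ := hM'B b (Finset.mem_erase.mpr ⟨hbbs, hb⟩)
          exact ⟨e, Finset.mem_insert_of_mem he, hee⟩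

lemma BW_egervary {W : ℕ} (G H : SimpleGraph V) (w : V → V → ℕ)
    (hw : ValidWeights W G w) (hHG : H ≤ G)
    (AS : Set V) (hbip : ∀ u v, H.Adj u v → (u ∈ AS ↔ v ∉ AS)) :
    ∃ (M : Finset (V × V)) (y : V → ℕ), IsSMatching H M ∧ BWCover H w y ∧
      ∑ v, y v ≤ smwt w M := by
  obtain ⟨y, hycov, hymin⟩ := BW_mincover H w W (fun u v h => (hw.2 u v (hHG h)).2)
  set PA : Finset V := Finset.univ.filter (fun a => a ∈ AS ∧ 0 < y a) with hPAdef
  set PB : Finset V := Finset.univ.filter (fun b => b ∉ AS ∧ 0 < y b) with hPBdef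
  have hbip' : ∀ u v, H.Adj u v → (u ∈ ASᶜ ↔ v ∉ ASᶜ) := by
    intro u v huv
    have h := hbip u v huv
    simp only [Set.mem_compl_iff]
    tauto
  -- Hall, side A
  have hallA : ∀ s : Finset {x // x ∈ PA},
      s.card ≤ (s.biUnion (fun a => BWtn H w y AS a.val)).card := by
    intro s
    have himg : (s.image Subtype.val).card = s.card :=
      Finset.card_image_of_injective _ Subtype.val_injective
    have hbi : s.biUnion (fun a => BWtn H w y AS a.val)
        = (s.image Subtype.val).biUnion (BWtn H w y AS) := by
      ext x
      simp [Finset.mem_biUnion]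
    rw [hbi, ← himg]
    apply BW_hall_cond H w y hw.1 AS hbip hycov hymin
    intro a ha
    obtain ⟨x, _hx, rfl⟩ := Finset.mem_image.mp ha
    exact (Finset.mem_filter.mp x.2).2
  obtain ⟨f₀, hf₀inj, hf₀mem⟩ :=
    (Finset.all_card_le_biUnion_card_iff_existsInjective'
      (fun a : {x // x ∈ PA} => BWtn H w y AS a.val)).mp hallA
  -- Hall, side B
  have hallB : ∀ s : Finset {x // x ∈ PB},
      s.card ≤ (s.biUnion (fun b => BWtn H w y ASᶜ b.val)).card := by
    intro s
    have himg : (s.image Subtype.val).card = s.card :=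
      Finset.card_image_of_injective _ Subtype.val_injective
    have hbi : s.biUnion (fun b => BWtn H w y ASᶜ b.val)
        = (s.image Subtype.val).biUnion (BWtn H w y ASᶜ) := by
      ext x
      simp [Finset.mem_biUnion]
    rw [hbi, ← himg]
    apply BW_hall_cond H w y hw.1 ASᶜ hbip' hycov hymin
    intro b hb
    obtain ⟨x, _hx, rfl⟩ := Finset.mem_image.mp hb
    have h2 := (Finset.mem_filter.mp x.2).2
    exact ⟨Set.mem_compl h2.1, h2.2⟩
  obtain ⟨g₀, hg₀inj, hg₀mem⟩ :=
    (Finset.all_card_le_biUnion_card_iff_existsInjective'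
      (fun b : {x // x ∈ PB} => BWtn H w y ASᶜ b.val)).mp hallB
  -- extend to total functions
  set f : V → V := fun v => if h : v ∈ PA then f₀ ⟨v, h⟩ else v with hfdef
  set g : V → V := fun v => if h : v ∈ PB then g₀ ⟨v, h⟩ else v with hgdef
  set T : V → V → Prop := fun a b => H.Adj a b ∧ y a + y b = w a b with hTdef
  obtain ⟨M, hMedge, hMdisj, hMA, hMB⟩ :=
    BW_MD T AS PB.card (∅ : Finset V) PA PB f g rfl
      (fun a ha => ⟨(Finset.mem_filter.mp ha).2.1, Finset.notMem_empty a⟩)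
      (fun b hb => ⟨(Finset.mem_filter.mp hb).2.1, Finset.notMem_empty b⟩)
      (by
        intro a ha
        have hfa : f a = f₀ ⟨a, ha⟩ := dif_pos ha
        have hmem0 := hf₀mem ⟨a, ha⟩
        simp only [BWtn, Finset.mem_filter, Finset.mem_univ, true_and] at hmem0
        rw [hfa]
        exact ⟨⟨hmem0.1, hmem0.2.1⟩, hmem0.2.2, Finset.notMem_empty _⟩)
      (by
        intro a ha a' ha' h
        have hfa : f a = f₀ ⟨a, ha⟩ := dif_pos ha
        have hfa' : f a' = f₀ ⟨a', ha'⟩ := dif_pos ha'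
        rw [hfa, hfa'] at h
        exact congrArg Subtype.val (hf₀inj h))
      (by
        intro b hb
        have hgb : g b = g₀ ⟨b, hb⟩ := dif_pos hb
        have hmem0 := hg₀mem ⟨b, hb⟩
        simp only [BWtn, Finset.mem_filter, Finset.mem_univ, true_and] at hmem0
        rw [hgb]
        refine ⟨⟨hmem0.1.symm, ?_⟩, ?_, Finset.notMem_empty _⟩
        · have ht : y b + y (g₀ ⟨b, hb⟩) = w b (g₀ ⟨b, hb⟩) := hmem0.2.1
          rw [hw.1 (g₀ ⟨b, hb⟩) b]
          omega
        · exact Set.not_notMem.mp hmem0.2.2)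
      (by
        intro b hb b' hb' h
        have hgb : g b = g₀ ⟨b, hb⟩ := dif_pos hb
        have hgb' : g b' = g₀ ⟨b', hb'⟩ := dif_pos hb'
        rw [hgb, hgb'] at h
        exact congrArg Subtype.val (hg₀inj h))
  refine ⟨M, y, ⟨?_, ?_⟩, hycov, ?_⟩
  · intro e he
    exact (hMedge e he).1.1
  · intro e he e' he' hne
    have h1 := hMdisj e he e' he' hne
    have hA := (hMedge e he).2.1
    have hB := (hMedge e he).2.2.1
    have hA' := (hMedge e' he').2.1
    have hB' := (hMedge e' he').2.2.1
    exact ⟨h1.1, fun h => hB' (h ▸ hA), fun h => hB (h.symm ▸ hA'), h1.2⟩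
  · -- the weight of M is at least the total value of the cover
    have hinj1 : ∀ e ∈ M, ∀ e' ∈ M, e.1 = e'.1 → e = e' := by
      intro e he e' he' h
      by_contra hne
      exact (hMdisj e he e' he' hne).1 h
    have hinj2 : ∀ e ∈ M, ∀ e' ∈ M, e.2 = e'.2 → e = e' := by
      intro e he e' he' h
      by_contra hne
      exact (hMdisj e he e' he' hne).2 h
    have hdisj : Disjoint (M.image Prod.fst) (M.image Prod.snd) := by
      rw [Finset.disjoint_left]
      rintro v hv1 hv2
      obtain ⟨e, he, rfl⟩ := Finset.mem_image.mp hv1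
      obtain ⟨e', he', heq⟩ := Finset.mem_image.mp hv2
      exact (hMedge e' he').2.2.1 (heq ▸ (hMedge e he).2.1)
    have hzero : ∀ v ∈ Finset.univ, v ∉ (M.image Prod.fst ∪ M.image Prod.snd) → y v = 0 := by
      intro v _ hv
      by_contra h0
      have hpos : 0 < y v := by omega
      by_cases hAS : v ∈ AS
      · have hvPA : v ∈ PA := by
          rw [hPAdef]; exact Finset.mem_filter.mpr ⟨Finset.mem_univ v, hAS, hpos⟩
        obtain ⟨e, he, hev⟩ := hMA v hvPA
        exact hv (Finset.mem_union_left _ (Finset.mem_image.mpr ⟨e, he, hev⟩))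
      · have hvPB : v ∈ PB := by
          rw [hPBdef]; exact Finset.mem_filter.mpr ⟨Finset.mem_univ v, hAS, hpos⟩
        obtain ⟨e, he, hev⟩ := hMB v hvPB
        exact hv (Finset.mem_union_right _ (Finset.mem_image.mpr ⟨e, he, hev⟩))
    calc ∑ v, y v = ∑ v ∈ (M.image Prod.fst ∪ M.image Prod.snd), y v :=
          (Finset.sum_subset (Finset.subset_univ _) hzero).symm
      _ = ∑ v ∈ M.image Prod.fst, y v + ∑ v ∈ M.image Prod.snd, y v :=
          Finset.sum_union hdisj
      _ = ∑ e ∈ M, y e.1 + ∑ e ∈ M, y e.2 := by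
          rw [Finset.sum_image hinj1, Finset.sum_image hinj2]
      _ = ∑ e ∈ M, (y e.1 + y e.2) := (Finset.sum_add_distrib).symm
      _ = ∑ e ∈ M, w e.1 e.2 := by
          apply Finset.sum_congr rfl
          intro e he
          exact (hMedge e he).1.2
      _ = smwt w M := rfl
      _ ≤ smwt w M := le_refl _

/-- Any `(β, β⁻)`-w-EDCS `H` of a bipartite edge-weighted graph `G`
with integer weights in `{1,...,W}` contains a matching `M_H` with
`(2 - 1/(2W) + ε) · w(M_H) ≥ w(M_G)`, provided `β/β⁻ ≤ 1 + ε/(5W)` and `β⁻ ≥ 4W/ε`. -/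
theorem bipartite_wedcs_matching
    {V : Type*} [Fintype V]
    (ε : ℝ) (hε0 : 0 < ε) (hε1 : ε < 1/2)
    (W : ℕ) (hW : 1 ≤ W)
    (β βm : ℕ) (hβ3 : 3 ≤ β) (hββm : βm + 2 ≤ β)
    (hratio : (β : ℝ) / βm ≤ 1 + ε / (5 * W))
    (hβm : 4 * (W : ℝ) / ε ≤ (βm : ℝ))
    (G H : SimpleGraph V) (w : V → V → ℕ)
    (hw : ValidWeights W G w)
    (hbip : ∃ A : Set V, ∀ u v, G.Adj u v → (u ∈ A ↔ v ∉ A))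
    (hH : IsWEDCS G H w β βm) :
    ∃ M, IsSMatching H M ∧
      ∀ M', IsSMatching G M' →
        (smwt w M' : ℝ) ≤ (2 - 1 / (2 * W) + ε) * smwt w M := by
  obtain ⟨AS, hAS⟩ := hbip
  have hASH : ∀ u v, H.Adj u v → (u ∈ AS ↔ v ∉ AS) := fun u v h => hAS u v (hH.1 h)
  obtain ⟨M, y, hM, hycov, hwt⟩ := BW_egervary G H w hw hH.1 AS hASH
  refine ⟨M, hM, ?_⟩
  intro M' hM'
  have hW1 : (1:ℝ) ≤ (W:ℝ) := by exact_mod_cast hW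
  have hW0 : (0:ℝ) < (W:ℝ) := by linarith
  have hβm1 : 1 ≤ βm := by
    by_contra h
    push_neg at h
    have hβm0 : βm = 0 := by omega
    rw [hβm0] at hβm
    have h4 : (0:ℝ) < 4 * (W:ℝ) / ε := by positivity
    simp only [Nat.cast_zero] at hβm
    linarith
  have hβmR : (0:ℝ) < (βm:ℝ) := by exact_mod_cast hβm1
  have hratio' : (β:ℝ) ≤ (βm:ℝ) * (1 + ε/(5*(W:ℝ))) := by
    rw [div_le_iff₀ hβmR] at hratio
    linarith [hratio]
  have hβm2 : βm ≤ β := by omega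
  have hper : ∀ e ∈ M', (w e.1 e.2 : ℝ) ≤ (1+ε/2) * ((y e.1 : ℝ) + (y e.2 : ℝ))
      + (1 - 1/(2*(W:ℝ)) + ε/4) * (BWr H w y e.1 + BWr H w y e.2) := by
    intro e he
    exact BW_peredge hε0 hε1 hW hβ3 hβm1 hβm2 hratio' hw hH hycov (hM'.1 e he)
  have hsum1 : ∑ e ∈ M', ((y e.1 : ℝ) + (y e.2 : ℝ)) ≤ ∑ v, (y v : ℝ) :=
    BW_matchsum hM' (fun v => (y v : ℝ)) (fun v => by positivity)
  have hsum2 : ∑ e ∈ M', (BWr H w y e.1 + BWr H w y e.2) ≤ ∑ v, (y v : ℝ) :=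
    le_trans (BW_matchsum hM' (BWr H w y) (BWr_nonneg H w y)) (sum_BWr_le y hw hH.1)
  have h2W : 1/(2*(W:ℝ)) ≤ 1/2 := by
    rw [div_le_div_iff₀ (by positivity) (by norm_num)]
    linarith
  have hΓ0 : (0:ℝ) ≤ 1 - 1/(2*(W:ℝ)) + ε/4 := by linarith
  have hA0 : (0:ℝ) ≤ 1 + ε/2 := by linarith
  have hchain : (smwt w M' : ℝ) ≤ (2 - 1/(2*(W:ℝ)) + 3*ε/4) * ∑ v, (y v : ℝ) := by
    calc (smwt w M' : ℝ) = ∑ e ∈ M', (w e.1 e.2 : ℝ) := by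
          rw [smwt]; push_cast; rfl
      _ ≤ ∑ e ∈ M', ((1+ε/2) * ((y e.1 : ℝ) + (y e.2 : ℝ))
            + (1 - 1/(2*(W:ℝ)) + ε/4) * (BWr H w y e.1 + BWr H w y e.2)) :=
          Finset.sum_le_sum hper
      _ = (1+ε/2) * (∑ e ∈ M', ((y e.1 : ℝ) + (y e.2 : ℝ)))
            + (1 - 1/(2*(W:ℝ)) + ε/4) * (∑ e ∈ M', (BWr H w y e.1 + BWr H w y e.2)) := by
          rw [Finset.sum_add_distrib, Finset.mul_sum, Finset.mul_sum]
      _ ≤ (1+ε/2) * (∑ v, (y v : ℝ)) + (1 - 1/(2*(W:ℝ)) + ε/4) * (∑ v, (y v : ℝ)) :=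
          add_le_add (mul_le_mul_of_nonneg_left hsum1 hA0)
            (mul_le_mul_of_nonneg_left hsum2 hΓ0)
      _ = (2 - 1/(2*(W:ℝ)) + 3*ε/4) * ∑ v, (y v : ℝ) := by ring
  have hy_le : (∑ v, (y v : ℝ)) ≤ (smwt w M : ℝ) := by
    have : ((∑ v, y v : ℕ) : ℝ) ≤ ((smwt w M : ℕ) : ℝ) := by exact_mod_cast hwt
    calc (∑ v, (y v : ℝ)) = ((∑ v, y v : ℕ) : ℝ) := by push_cast; rfl
      _ ≤ _ := this
  have hCpos : (0:ℝ) ≤ 2 - 1/(2*(W:ℝ)) + 3*ε/4 := by linarith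
  have hCC : (2 - 1/(2*(W:ℝ)) + 3*ε/4) ≤ 2 - 1/(2*(W:ℝ)) + ε := by linarith
  calc (smwt w M' : ℝ) ≤ (2 - 1/(2*(W:ℝ)) + 3*ε/4) * ∑ v, (y v : ℝ) := hchain
    _ ≤ (2 - 1/(2*(W:ℝ)) + 3*ε/4) * (smwt w M : ℝ) :=
        mul_le_mul_of_nonneg_left hy_le hCpos
    _ ≤ (2 - 1/(2*(W:ℝ)) + ε) * (smwt w M : ℝ) :=
        mul_le_mul_of_nonneg_right hCC (by positivity)
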